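/- Let (Q_n)_{n∈ℕ} be a sequence of real Gaussian random variables defined on the same probability space which converges in distribution to N(0,σ²) for some σ ∈ (0,∞). Then for any δ > 0, Q_n/(log n)^{1/2+δ} → 0 almost surely as n → ∞. -/

import Mathlib

open MeasureTheory ProbabilityTheory Filter Topology
open Real Set
open scoped ENNReal NNReal

set_option maxHeartbeats 1000000

lemma gauss_tail_Ici (m : ℝ) (v : NNReal) (hv : v ≠ 0) {s : ℝ} (hs : 0 < s) :
    gaussianReal m v (Set.Ici (m + s)) ≤
      ENNReal.ofReal ((Real.sqrt (2 * π * v))⁻¹ * (2 * v / s) * Real.exp (-s ^ 2 / (2 * v))) := by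
  have hv0 : (0 : ℝ) < v := NNReal.coe_pos.mpr (pos_iff_ne_zero.mpr hv)
  set c : ℝ := (Real.sqrt (2 * π * v))⁻¹ with hc
  have hc0 : 0 ≤ c := by positivity
  set b : ℝ := s / (2 * v) with hb
  have hb0 : 0 < b := by positivity
  rw [gaussianReal_apply_eq_integral m hv]
  apply ENNReal.ofReal_le_ofReal
  have hint : IntegrableOn (fun x => (c * Real.exp (b * m)) * Real.exp (-b * x))
      (Set.Ici (m + s)) := by
    rw [integrableOn_Ici_iff_integrableOn_Ioi]
    exact (exp_neg_integrableOn_Ioi (m + s) hb0).const_mul _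
  have hle : ∫ x in Set.Ici (m + s), gaussianPDFReal m v x
      ≤ ∫ x in Set.Ici (m + s), (c * Real.exp (b * m)) * Real.exp (-b * x) := by
    refine setIntegral_mono_on ((integrable_gaussianPDFReal m v).integrableOn) hint
      measurableSet_Ici ?_
    intro x hx
    rw [gaussianPDFReal]
    rw [show (c * Real.exp (b * m)) * Real.exp (-b * x) = c * Real.exp (-(b * (x - m))) by
      rw [mul_assoc, ← Real.exp_add]; ring_nf]
    apply mul_le_mul_of_nonneg_left _ hc0
    apply Real.exp_le_exp.mpr
    have hxm : s ≤ x - m := by simp only [Set.mem_Ici] at hx; linarith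
    have h2v : (0:ℝ) < 2 * v := by positivity
    rw [hb, show -(s / (2 * (v:ℝ)) * (x - m)) = -(s * (x - m)) / (2 * v) by ring]
    exact (div_le_div_iff_of_pos_right h2v).mpr (by nlinarith)
  refine hle.trans ?_
  have hIoi : ∫ x in Set.Ici (m + s), (c * Real.exp (b * m)) * Real.exp (-b * x)
      = ∫ x in Set.Ioi (m + s), (c * Real.exp (b * m)) * Real.exp (-b * x) :=
    integral_Ici_eq_integral_Ioi
  rw [hIoi, MeasureTheory.integral_const_mul]
  have hcomp := integral_comp_mul_left_Ioi (fun x => Real.exp (-x)) (m + s) hb0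
  simp only [smul_eq_mul] at hcomp
  have : ∫ x in Set.Ioi (m + s), Real.exp (-b * x)
      = b⁻¹ * Real.exp (-(b * (m + s))) := by
    simp only [neg_mul] at hcomp ⊢
    rw [hcomp, integral_exp_neg_Ioi]
  rw [this]
  have hbinv : b⁻¹ = 2 * v / s := by rw [hb]; field_simp
  have hexp : Real.exp (b * m) * Real.exp (-(b * (m + s))) = Real.exp (-s ^ 2 / (2 * v)) := by
    rw [← Real.exp_add, hb]
    congr 1
    field_simp
    ring
  calc c * Real.exp (b * m) * (b⁻¹ * Real.exp (-(b * (m + s))))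
      = c * (b⁻¹) * (Real.exp (b * m) * Real.exp (-(b * (m + s)))) := by ring
    _ = c * (2 * v / s) * Real.exp (-s ^ 2 / (2 * v)) := by
        rw [hbinv, hexp]
    _ ≤ (Real.sqrt (2 * π * v))⁻¹ * (2 * v / s) * Real.exp (-s ^ 2 / (2 * v)) := le_rfl

lemma gauss_tail_Iic (m : ℝ) (v : NNReal) (hv : v ≠ 0) {s : ℝ} (hs : 0 < s) :
    gaussianReal m v (Set.Iic (m - s)) ≤
      ENNReal.ofReal ((Real.sqrt (2 * π * v))⁻¹ * (2 * v / s) * Real.exp (-s ^ 2 / (2 * v))) := by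
  have hmap := gaussianReal_map_const_mul (μ := m) (v := v) (-1)
  have hv1 : (NNReal.mk ((-1:ℝ)^2) (sq_nonneg _)) = 1 := by
    ext; exact (by norm_num : ((-1:ℝ))^2 = 1)
  rw [hv1, one_mul] at hmap
  have hpre : ((-1 : ℝ) * ·) ⁻¹' (Set.Ici (-m + s)) = Set.Iic (m - s) := by
    ext x
    simp only [Set.mem_preimage, Set.mem_Ici, Set.mem_Iic]
    constructor <;> intro h <;> linarith
  have hmeas : Measurable ((-1 : ℝ) * ·) := measurable_id.const_mul _
  have := Measure.map_apply hmeas (measurableSet_Ici (a := -m + s))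
    (μ := gaussianReal m v)
  rw [hmap, hpre] at this
  rw [← this, show (-1 : ℝ) * m = -m by ring]
  exact gauss_tail_Ici (-m) v hv hs

lemma gauss_tail_abs (m : ℝ) (v : NNReal) (hv : v ≠ 0) {t : ℝ} (ht : |m| < t) :
    gaussianReal m v {x | t ≤ |x|} ≤
      2 * ENNReal.ofReal ((Real.sqrt (2 * π * v))⁻¹ * (2 * v / (t - |m|))
        * Real.exp (-(t - |m|) ^ 2 / (2 * v))) := by
  set s := t - |m| with hsdef
  have hs : 0 < s := by simp [hsdef]; linarith
  have hsub : {x : ℝ | t ≤ |x|} ⊆ Set.Ici (m + s) ∪ Set.Iic (m - s) := by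
    intro x hx
    simp only [Set.mem_setOf_eq] at hx
    rcases le_abs.mp hx with h | h
    · left
      have := le_abs_self m
      simp only [Set.mem_Ici]; linarith
    · right
      have := neg_abs_le m
      simp only [Set.mem_Iic]; linarith
  calc gaussianReal m v {x | t ≤ |x|}
      ≤ gaussianReal m v (Set.Ici (m + s) ∪ Set.Iic (m - s)) := measure_mono hsub
    _ ≤ gaussianReal m v (Set.Ici (m + s)) + gaussianReal m v (Set.Iic (m - s)) :=
        measure_union_le _ _
    _ ≤ _ := by
        rw [two_mul]
        exact add_le_add (gauss_tail_Ici m v hv hs) (gauss_tail_Iic m v hv hs)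

/-- If `(Q_n)` is a sequence of Gaussian random variables on a common probability
space converging in distribution to `N(0, σ²)` with `σ ∈ (0, ∞)` (for Gaussian
variables `Q_n ~ N(μ_n, v_n)` this is equivalent to the means `μ_n → 0` and the
variances `v_n → σ²`), then for every `δ > 0`, `Q_n / (log n)^{1/2+δ} → 0`
almost surely. -/
theorem gaussian_log_as_convergence {Ω : Type*} [MeasurableSpace Ω]
    (P : Measure Ω) [IsProbabilityMeasure P]
    (Q : ℕ → Ω → ℝ) (μ : ℕ → ℝ) (v : ℕ → NNReal)
    (hQ : ∀ n, Measure.map (Q n) P = gaussianReal (μ n) (v n))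
    (σ : ℝ) (hσ : 0 < σ)
    (hμ : Tendsto μ atTop (𝓝 0))
    (hv : Tendsto (fun n => (v n : ℝ)) atTop (𝓝 (σ ^ 2))) :
    ∀ δ : ℝ, 0 < δ →
      ∀ᵐ ω ∂P, Tendsto (fun n : ℕ => Q n ω / (Real.log n) ^ ((1 : ℝ) / 2 + δ))
        atTop (𝓝 0) := by
  intro δ hδ
  have hmeasQ : ∀ n, AEMeasurable (Q n) P := by
    intro n
    by_contra h
    have h0 := Measure.map_of_not_aemeasurable h
    rw [hQ n] at h0
    exact (IsProbabilityMeasure.ne_zero (gaussianReal (μ n) (v n))) h0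
  set q : ℝ := 1/2 + δ/2 with hqdef
  have hq0 : 0 < q := by positivity
  set p : ℝ := (1:ℝ)/2 + δ with hpdef
  set E : ℕ → Set Ω := fun n => {ω | (Real.log n) ^ q ≤ |Q n ω|} with hEdef
  have hlog : Tendsto (fun n : ℕ => Real.log n) atTop atTop :=
    Real.tendsto_log_atTop.comp tendsto_natCast_atTop_atTop
  have htq : Tendsto (fun n : ℕ => (Real.log n) ^ q) atTop atTop :=
    (tendsto_rpow_atTop hq0).comp hlog
  have htδ : Tendsto (fun n : ℕ => (Real.log n) ^ δ) atTop atTop :=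
    (tendsto_rpow_atTop hδ).comp hlog
  set c0 : ℝ := (Real.sqrt (π * σ^2))⁻¹ with hc0def
  have hc0pos : 0 < c0 := by
    rw [hc0def]
    apply inv_pos.mpr
    apply Real.sqrt_pos.mpr
    positivity
  set K : ℝ := 8 * σ^2 * c0 with hKdef
  have hKpos : 0 < K := by rw [hKdef]; positivity
  set C : ℝ := 16 * σ^2 * (2 + max 0 (Real.log K)) with hCdef
  clear_value C
  -- the key eventual tail bound
  have hev : ∀ᶠ n in atTop, P (E n) ≤ ENNReal.ofReal (1 / (n:ℝ)^2) := by
    have h1 : ∀ᶠ n : ℕ in atTop, 1 ≤ Real.log n := hlog.eventually_ge_atTop 1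
    have h2 : ∀ᶠ n in atTop, |μ n| ≤ 1 := by
      filter_upwards [hμ.eventually (Metric.ball_mem_nhds (0:ℝ) one_pos)] with n hn
      simp only [Metric.mem_ball, Real.dist_eq, sub_zero] at hn
      exact hn.le
    have hvlo : ∀ᶠ n in atTop, σ^2/2 < (v n : ℝ) :=
      hv.eventually (eventually_gt_nhds (by nlinarith))
    have hvhi : ∀ᶠ n in atTop, (v n : ℝ) < 2*σ^2 :=
      hv.eventually (eventually_lt_nhds (by nlinarith))
    have h4 : ∀ᶠ n : ℕ in atTop, 2 ≤ (Real.log n) ^ q := htq.eventually_ge_atTop 2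
    have h5 : ∀ᶠ n : ℕ in atTop, C ≤ (Real.log n) ^ δ := htδ.eventually_ge_atTop C
    have h6 : ∀ᶠ n : ℕ in atTop, (1:ℝ) ≤ (n:ℝ) :=
      tendsto_natCast_atTop_atTop.eventually_ge_atTop 1
    filter_upwards [h1, h2, hvlo, hvhi, h4, h5, h6] with n hlog1 hμ1 hwlo hwhi ht2 hCle hn1
    set t : ℝ := (Real.log n) ^ q with htdef
    set w : ℝ := (v n : ℝ) with hwdef
    have hw0 : 0 < w := by nlinarith
    have hvne : v n ≠ 0 := by
      intro h0
      rw [hwdef, h0] at hw0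
      norm_num at hw0
    have hmt : |μ n| < t := by linarith
    set a : ℝ := t - |μ n| with hadef
    have ha1 : 1 ≤ a := by rw [hadef]; linarith
    have ha0 : 0 < a := by linarith
    -- measure identity
    have hA : MeasurableSet {x : ℝ | t ≤ |x|} :=
      measurableSet_le measurable_const continuous_abs.measurable
    have hPE : P (E n) = gaussianReal (μ n) (v n) {x | t ≤ |x|} := by
      rw [show E n = Q n ⁻¹' {x | t ≤ |x|} from rfl,
        ← Measure.map_apply_of_aemeasurable (hmeasQ n) hA, hQ n]
    rw [hPE]
    refine le_trans (gauss_tail_abs (μ n) (v n) hvne hmt) ?_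
    rw [show ENNReal.ofReal ((Real.sqrt (2 * π * (v n : ℝ)))⁻¹ * (2 * (v n : ℝ) / (t - |μ n|))
        * Real.exp (-(t - |μ n|) ^ 2 / (2 * (v n : ℝ)))) = ENNReal.ofReal
        ((Real.sqrt (2 * π * w))⁻¹ * (2 * w / a) * Real.exp (-a ^ 2 / (2 * w))) from rfl]
    rw [show (2 : ℝ≥0∞) * ENNReal.ofReal ((Real.sqrt (2 * π * w))⁻¹ * (2 * w / a)
        * Real.exp (-a ^ 2 / (2 * w))) = ENNReal.ofReal (2 * ((Real.sqrt (2 * π * w))⁻¹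
        * (2 * w / a) * Real.exp (-a ^ 2 / (2 * w)))) by
      rw [ENNReal.ofReal_mul (by norm_num : (0:ℝ) ≤ 2), ENNReal.ofReal_ofNat]]
    apply ENNReal.ofReal_le_ofReal
    clear_value t w a
    -- real inequality
    have hn0 : (0:ℝ) < (n:ℝ) := by linarith
    have e1 : (Real.sqrt (2*π*w))⁻¹ ≤ c0 := by
      rw [hc0def]
      apply inv_anti₀ (Real.sqrt_pos.mpr (by positivity))
      apply Real.sqrt_le_sqrt
      nlinarith [Real.pi_pos]
    have e2 : 2*w/a ≤ 4*σ^2 := by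
      rw [div_le_iff₀ ha0]
      nlinarith
    have e3 : Real.exp (-a^2/(2*w)) ≤ Real.exp (-(a^2/(4*σ^2))) := by
      apply Real.exp_le_exp.mpr
      rw [neg_div]
      apply neg_le_neg
      exact div_le_div_of_nonneg_left (sq_nonneg a) (by positivity) (by nlinarith)
    have harith : 2 * Real.log n + Real.log K ≤ a^2/(4*σ^2) := by
      have ht4 : t^2/4 ≤ a^2 := by nlinarith
      have htC : C * Real.log n ≤ t^2 := by
        have : t^2 = (Real.log n) ^ δ * Real.log n := by
          rw [htdef, ← Real.rpow_natCast ((Real.log n) ^ q) 2, ← Real.rpow_mul (by linarith)]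
          rw [show q * ((2:ℕ):ℝ) = δ + 1 by push_cast; rw [hqdef]; ring]
          rw [Real.rpow_add (by linarith), Real.rpow_one]
        rw [this]
        exact mul_le_mul_of_nonneg_right hCle (by linarith)
      rw [le_div_iff₀ (by positivity)]
      have hmax1 : Real.log K ≤ max 0 (Real.log K) := le_max_right _ _
      have hmax0 : (0:ℝ) ≤ max 0 (Real.log K) := le_max_left _ _
      rw [hCdef] at htC
      nlinarith [mul_le_mul_of_nonneg_left hlog1 hmax0]
    have hn2 : Real.exp (-(2*Real.log n)) = 1/(n:ℝ)^2 := by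
      rw [Real.exp_neg, show (2:ℝ)*Real.log n = Real.log ((n:ℝ)^2) by
        rw [Real.log_pow]; push_cast; ring, Real.exp_log (by positivity), one_div]
    calc 2 * ((Real.sqrt (2*π*w))⁻¹ * (2*w/a) * Real.exp (-a^2/(2*w)))
        ≤ 2 * (c0 * (4*σ^2) * Real.exp (-(a^2/(4*σ^2)))) := by
          have h1' : (0:ℝ) ≤ (Real.sqrt (2*π*w))⁻¹ := by positivity
          have h2' : (0:ℝ) ≤ 2*w/a := by positivity
          gcongr <;> first
            | exact hc0pos.le
            | exact e1
            | exact e2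
            | exact e3
      _ = K * Real.exp (-(a^2/(4*σ^2))) := by rw [hKdef]; ring
      _ ≤ 1/(n:ℝ)^2 := by
          rw [← hn2, ← Real.exp_log hKpos, ← Real.exp_add]
          exact Real.exp_le_exp.mpr (by linarith)
  -- Borel-Cantelli
  clear_value E
  have hsum : (∑' n, P (E n)) ≠ ∞ := by
    obtain ⟨N, hN⟩ := eventually_atTop.mp hev
    have hpt : ∀ n, P (E n) ≤ Set.indicator (↑(Finset.range N)) (fun _ => (1:ℝ≥0∞)) n
        + ENNReal.ofReal (1/(n:ℝ)^2) := by
      intro n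
      by_cases hn : n < N
      · calc P (E n) ≤ 1 := prob_le_one
          _ ≤ _ := by
            rw [Set.indicator_of_mem (by simpa using hn)]
            exact le_self_add
      · exact le_trans (hN n (by omega)) le_add_self
    refine ne_top_of_le_ne_top ?_ (ENNReal.tsum_le_tsum hpt)
    rw [ENNReal.tsum_add]
    apply ENNReal.add_ne_top.mpr
    constructor
    · rw [← sum_eq_tsum_indicator]
      exact (ENNReal.sum_lt_top.mpr (fun i _ => ENNReal.one_lt_top)).ne
    · rw [← ENNReal.ofReal_tsum_of_nonneg (fun n => by positivity)
        (Real.summable_one_div_nat_pow.mpr (by norm_num))]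
      exact ENNReal.ofReal_ne_top
  filter_upwards [MeasureTheory.ae_eventually_notMem hsum] with ω hω
  have hg : Tendsto (fun n : ℕ => (Real.log n) ^ (-(δ/2))) atTop (𝓝 0) :=
    (tendsto_rpow_neg_atTop (by positivity)).comp hlog
  apply squeeze_zero_norm' _ hg
  have h1 : ∀ᶠ n : ℕ in atTop, 1 ≤ Real.log n := hlog.eventually_ge_atTop 1
  filter_upwards [hω, h1] with n hn hlogn
  have hlogpos : (0:ℝ) < Real.log n := by linarith
  have hQle : |Q n ω| ≤ (Real.log n) ^ q := by
    simp only [hEdef, Set.mem_setOf_eq] at hn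
    exact (not_le.mp hn).le
  have hlp : (0:ℝ) < (Real.log n) ^ p := Real.rpow_pos_of_pos hlogpos _
  rw [Real.norm_eq_abs, abs_div, abs_of_pos hlp]
  calc |Q n ω| / (Real.log n) ^ p ≤ (Real.log n) ^ q / (Real.log n) ^ p := by gcongr
    _ = (Real.log n) ^ (q - p) := (Real.rpow_sub hlogpos q p).symm
    _ = (Real.log n) ^ (-(δ/2)) := by rw [show q - p = -(δ/2) by rw [hqdef, hpdef]; ring]
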